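/- Let μ > 0, F ∈ ℝ², and 0 < a < b. Let u_δ(x) = (1/(4πμ))·(−ln|x|·F + ((x·F)/|x|²)·x) and p_δ(x) = (1/(2π))·(x·F)/|x|² be the 2D Stokeslet, and let χ̃(x) = χ(|x|) with χ(r) = (2r³ − 3(a+b)r² + 6abr + b²(b−3a))/(b−a)³ for a ≤ r ≤ b. Then for every x ∈ ℝ² with a < |x| < b, writing r = |x|: −μ·Δ(χ̃·u_δ)(x) + ∇(χ̃·p_δ)(x) = [3 / (2π(b−a)³ r)] · ( [ (3r² − 2(a+b)r + ab)·ln r + 2r² − 2(a+b)r + 2ab ]·F + (ab − r²)·((x·F)/r²)·x ). -/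

import Mathlib

open Real MeasureTheory

noncomputable section

/-- Euclidean inner product on `Fin d → ℝ`. -/
def dot {d : ℕ} (x y : Fin d → ℝ) : ℝ := ∑ i, x i * y i

/-- Euclidean norm on `Fin d → ℝ`. -/
def eunorm {d : ℕ} (x : Fin d → ℝ) : ℝ := Real.sqrt (∑ i, (x i) ^ 2)

/-- `i`-th partial derivative of a scalar field. -/
def pd {d : ℕ} (i : Fin d) (f : (Fin d → ℝ) → ℝ) (x : Fin d → ℝ) : ℝ :=
  fderiv ℝ f x (Pi.single i 1)

/-- Laplacian (sum of second partial derivatives) of a scalar field. -/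
def lap {d : ℕ} (f : (Fin d → ℝ) → ℝ) (x : Fin d → ℝ) : ℝ :=
  ∑ i, pd i (fun y => pd i f y) x

/-- Divergence of a vector field. -/
def divg {d : ℕ} (u : (Fin d → ℝ) → (Fin d → ℝ)) (x : Fin d → ℝ) : ℝ :=
  ∑ i, pd i (fun y => u y i) x

/-- 2D Stokeslet velocity. -/
def udelta2 (μ : ℝ) (F : Fin 2 → ℝ) (x : Fin 2 → ℝ) : Fin 2 → ℝ :=
  fun j => (1 / (4 * π * μ)) *
    ((- Real.log (eunorm x)) * F j + (dot x F / (eunorm x) ^ 2) * x j)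

/-- 2D Stokeslet pressure. -/
def pdelta2 (F : Fin 2 → ℝ) (x : Fin 2 → ℝ) : ℝ :=
  (1 / (2 * π)) * (dot x F / (eunorm x) ^ 2)

/-- The radial cubic cutoff profile: `1` for `r ≤ a`, a cubic polynomial on `[a, b]`,
and `0` for `r ≥ b`. -/
def cutoff (a b r : ℝ) : ℝ :=
  if r ≤ a then 1
  else if r ≤ b then
    (2 * r ^ 3 - 3 * (a + b) * r ^ 2 + 6 * a * b * r + b ^ 2 * (b - 3 * a)) / (b - a) ^ 3
  else 0



lemma HasDerivAt.congr_d {f : ℝ → ℝ} {d d' t : ℝ} (h : HasDerivAt f d t) (hd : d' = d) :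
    HasDerivAt f d' t := hd ▸ h

def Pc (a b t : ℝ) : ℝ := (2*t^3 - 3*(a+b)*t^2 + 6*a*b*t + b^2*(b-3*a))/(b-a)^3
def Pc1 (a b t : ℝ) : ℝ := (6*t^2 - 6*(a+b)*t + 6*a*b)/(b-a)^3
def Pc2 (a b t : ℝ) : ℝ := (12*t - 6*(a+b))/(b-a)^3

lemma hasDerivAt_Pc (a b t : ℝ) : HasDerivAt (Pc a b) (Pc1 a b t) t := by
  have h3 : HasDerivAt (fun t : ℝ => t^3) (3*t^2) t := by simpa using hasDerivAt_pow 3 t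
  have h2 : HasDerivAt (fun t : ℝ => t^2) (2*t) t := by simpa using hasDerivAt_pow 2 t
  have h1 : HasDerivAt (fun t : ℝ => t) 1 t := hasDerivAt_id t
  have h : HasDerivAt (fun t : ℝ => 2*t^3 - 3*(a+b)*t^2 + 6*a*b*t + b^2*(b-3*a))
      (6*t^2 - 6*(a+b)*t + 6*a*b) t :=
    ((((h3.const_mul 2).sub (h2.const_mul (3*(a+b)))).add (h1.const_mul (6*a*b))).add_const (b^2*(b-3*a))).congr_d (by ring)
  exact h.div_const _

lemma hasDerivAt_Pc1 (a b t : ℝ) : HasDerivAt (Pc1 a b) (Pc2 a b t) t := by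
  have h2 : HasDerivAt (fun t : ℝ => t^2) (2*t) t := by simpa using hasDerivAt_pow 2 t
  have h1 : HasDerivAt (fun t : ℝ => t) 1 t := hasDerivAt_id t
  have h : HasDerivAt (fun t : ℝ => 6*t^2 - 6*(a+b)*t + 6*a*b) (12*t - 6*(a+b)) t :=
    (((h2.const_mul 6).sub (h1.const_mul (6*(a+b)))).add_const (6*a*b)).congr_d (by ring)
  exact h.div_const _

lemma hasDerivAt_inv' {t : ℝ} (ht : t ≠ 0) : HasDerivAt (fun s : ℝ => s⁻¹) (-(t⁻¹*t⁻¹)) t := by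
  simpa [pow_two, mul_inv] using hasDerivAt_inv ht

def ph (μ a b t : ℝ) : ℝ := -(1/(4*π*μ)) * (Pc a b t * Real.log t)
def ph1 (μ a b t : ℝ) : ℝ := -(1/(4*π*μ)) * (Pc1 a b t * Real.log t + Pc a b t * t⁻¹)
def ph2 (μ a b t : ℝ) : ℝ := -(1/(4*π*μ)) * (Pc2 a b t * Real.log t + 2*(Pc1 a b t * t⁻¹) - Pc a b t * (t⁻¹*t⁻¹))

lemma hasDerivAt_ph {μ a b t : ℝ} (ht : t ≠ 0) : HasDerivAt (ph μ a b) (ph1 μ a b t) t := by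
  have := ((hasDerivAt_Pc a b t).mul (Real.hasDerivAt_log ht)).const_mul (-(1/(4*π*μ)))
  unfold ph ph1
  exact this.congr_d (by ring)

lemma hasDerivAt_ph1 {μ a b t : ℝ} (ht : t ≠ 0) : HasDerivAt (ph1 μ a b) (ph2 μ a b t) t := by
  have := (((hasDerivAt_Pc1 a b t).mul (Real.hasDerivAt_log ht)).add
    ((hasDerivAt_Pc a b t).mul (hasDerivAt_inv' ht))).const_mul (-(1/(4*π*μ)))
  unfold ph1 ph2
  exact this.congr_d (by ring)

def ps (μ a b t : ℝ) : ℝ := (1/(4*π*μ)) * (Pc a b t * (t⁻¹*t⁻¹))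
def ps1 (μ a b t : ℝ) : ℝ := (1/(4*π*μ)) * (Pc1 a b t * (t⁻¹*t⁻¹) - 2*(Pc a b t * (t⁻¹*t⁻¹*t⁻¹)))
def ps2 (μ a b t : ℝ) : ℝ := (1/(4*π*μ)) * (Pc2 a b t * (t⁻¹*t⁻¹) - 4*(Pc1 a b t * (t⁻¹*t⁻¹*t⁻¹)) + 6*(Pc a b t * (t⁻¹*t⁻¹*t⁻¹*t⁻¹)))

lemma hasDerivAt_ps {μ a b t : ℝ} (ht : t ≠ 0) : HasDerivAt (ps μ a b) (ps1 μ a b t) t := by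
  have := ((hasDerivAt_Pc a b t).mul ((hasDerivAt_inv' ht).mul (hasDerivAt_inv' ht))).const_mul (1/(4*π*μ))
  unfold ps ps1
  exact this.congr_d (by simp only [Pi.mul_apply]; ring)

lemma hasDerivAt_ps1 {μ a b t : ℝ} (ht : t ≠ 0) : HasDerivAt (ps1 μ a b) (ps2 μ a b t) t := by
  have := (((hasDerivAt_Pc1 a b t).mul ((hasDerivAt_inv' ht).mul (hasDerivAt_inv' ht))).sub
    (((hasDerivAt_Pc a b t).mul (((hasDerivAt_inv' ht).mul (hasDerivAt_inv' ht)).mul (hasDerivAt_inv' ht))).const_mul 2)).const_mul (1/(4*π*μ))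
  unfold ps1 ps2
  exact this.congr_d (by simp only [Pi.mul_apply]; ring)

def Af (μ a b t : ℝ) : ℝ := ph1 μ a b t * t⁻¹
def Af1 (μ a b t : ℝ) : ℝ := ph2 μ a b t * t⁻¹ - ph1 μ a b t * (t⁻¹*t⁻¹)
def Bf (μ a b t : ℝ) : ℝ := ps1 μ a b t * t⁻¹
def Bf1 (μ a b t : ℝ) : ℝ := ps2 μ a b t * t⁻¹ - ps1 μ a b t * (t⁻¹*t⁻¹)

lemma hasDerivAt_Af {μ a b t : ℝ} (ht : t ≠ 0) : HasDerivAt (Af μ a b) (Af1 μ a b t) t := by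
  have := (hasDerivAt_ph1 (μ:=μ) (a:=a) (b:=b) ht).mul (hasDerivAt_inv' ht)
  unfold Af Af1
  exact this.congr_d (by ring)

lemma hasDerivAt_Bf {μ a b t : ℝ} (ht : t ≠ 0) : HasDerivAt (Bf μ a b) (Bf1 μ a b t) t := by
  have := (hasDerivAt_ps1 (μ:=μ) (a:=a) (b:=b) ht).mul (hasDerivAt_inv' ht)
  unfold Bf Bf1
  exact this.congr_d (by ring)

def th (a b t : ℝ) : ℝ := (1/(2*π)) * (Pc a b t * (t⁻¹*t⁻¹))
def th1 (a b t : ℝ) : ℝ := (1/(2*π)) * (Pc1 a b t * (t⁻¹*t⁻¹) - 2*(Pc a b t * (t⁻¹*t⁻¹*t⁻¹)))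

lemma hasDerivAt_th {a b t : ℝ} (ht : t ≠ 0) : HasDerivAt (th a b) (th1 a b t) t := by
  have := ((hasDerivAt_Pc a b t).mul ((hasDerivAt_inv' ht).mul (hasDerivAt_inv' ht))).const_mul (1/(2*π))
  unfold th th1
  exact this.congr_d (by simp only [Pi.mul_apply]; ring)
abbrev pr (i : Fin 2) : (Fin 2 → ℝ) →L[ℝ] ℝ := ContinuousLinearMap.proj i

lemma hasFDerivAt_coord (i : Fin 2) (y : Fin 2 → ℝ) :
    HasFDerivAt (fun z : Fin 2 → ℝ => z i) (pr i) y := (pr i).hasFDerivAt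

lemma eunorm_eq (y : Fin 2 → ℝ) : eunorm y = Real.sqrt (y 0 * y 0 + y 1 * y 1) := by
  rw [eunorm, Fin.sum_univ_two, pow_two, pow_two]

lemma eunorm_sq (y : Fin 2 → ℝ) : eunorm y ^ 2 = y 0 * y 0 + y 1 * y 1 := by
  rw [eunorm, sq_sqrt (by positivity), Fin.sum_univ_two, pow_two, pow_two]

lemma hasFDerivAt_eunorm (y : Fin 2 → ℝ) (hy : eunorm y ≠ 0) :
    HasFDerivAt (eunorm : (Fin 2 → ℝ) → ℝ)
      ((eunorm y)⁻¹ • ((y 0) • pr 0 + (y 1) • pr 1)) y := by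
  have hfun : (eunorm : (Fin 2 → ℝ) → ℝ) = fun z => Real.sqrt (z 0 * z 0 + z 1 * z 1) :=
    funext eunorm_eq
  have hs : y 0 * y 0 + y 1 * y 1 ≠ 0 := by
    intro h
    apply hy
    rw [eunorm_eq, h, Real.sqrt_zero]
  have hsum : HasFDerivAt (fun z : Fin 2 → ℝ => z 0 * z 0 + z 1 * z 1)
      ((y 0 • pr 0 + y 0 • pr 0) + (y 1 • pr 1 + y 1 • pr 1)) y :=
    ((hasFDerivAt_coord 0 y).mul (hasFDerivAt_coord 0 y)).add
      ((hasFDerivAt_coord 1 y).mul (hasFDerivAt_coord 1 y))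
  have h := hsum.sqrt hs
  have hL : ((eunorm y)⁻¹ • ((y 0) • pr 0 + (y 1) • pr 1))
      = (1 / (2 * Real.sqrt (y 0 * y 0 + y 1 * y 1))) •
        ((y 0 • pr 0 + y 0 • pr 0) + (y 1 • pr 1 + y 1 • pr 1)) := by
    ext v
    simp only [ContinuousLinearMap.add_apply, ContinuousLinearMap.smul_apply,
      ContinuousLinearMap.proj_apply, smul_eq_mul]
    rw [eunorm_eq]
    have hq : Real.sqrt (y 0 * y 0 + y 1 * y 1) ≠ 0 := by
      rw [← eunorm_eq]; exact hy
    field_simp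
    ring
  rw [hL, hfun]
  exact h

lemma hasFDerivAt_radial {φ : ℝ → ℝ} {dv : ℝ} (y : Fin 2 → ℝ) (hy : eunorm y ≠ 0)
    (hφ : HasDerivAt φ dv (eunorm y)) :
    HasFDerivAt (fun z : Fin 2 → ℝ => φ (eunorm z))
      ((dv * (eunorm y)⁻¹) • ((y 0) • pr 0 + (y 1) • pr 1)) y := by
  have h := hφ.comp_hasFDerivAt y (hasFDerivAt_eunorm y hy)
  rw [show ((dv * (eunorm y)⁻¹) • ((y 0) • pr 0 + (y 1) • pr 1))
      = dv • ((eunorm y)⁻¹ • ((y 0) • pr 0 + (y 1) • pr 1)) by rw [smul_smul]]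
  exact h

lemma pd_Vt (μ a b : ℝ) (F : Fin 2 → ℝ) (j k : Fin 2) (y : Fin 2 → ℝ) (hy : eunorm y ≠ 0) :
    pd k (fun z : Fin 2 → ℝ => ph μ a b (eunorm z) * F j
        + ps μ a b (eunorm z) * ((z 0 * F 0 + z 1 * F 1) * z j)) y
      = Af μ a b (eunorm y) * (y k * F j)
        + Bf μ a b (eunorm y) * (y k * ((y 0 * F 0 + y 1 * F 1) * y j))
        + ps μ a b (eunorm y) * (F k * y j + (y 0 * F 0 + y 1 * F 1) * (Pi.single k (1:ℝ) : Fin 2 → ℝ) j) := by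
  have hph := hasFDerivAt_radial y hy (hasDerivAt_ph (μ := μ) (a := a) (b := b) hy)
  have hps := hasFDerivAt_radial y hy (hasDerivAt_ps (μ := μ) (a := a) (b := b) hy)
  have hw : HasFDerivAt (fun z : Fin 2 → ℝ => z 0 * F 0 + z 1 * F 1)
      ((F 0) • pr 0 + (F 1) • pr 1) y :=
    ((hasFDerivAt_coord 0 y).mul_const (F 0)).add ((hasFDerivAt_coord 1 y).mul_const (F 1))
  have hV : HasFDerivAt (fun z : Fin 2 → ℝ => ph μ a b (eunorm z) * F j
      + ps μ a b (eunorm z) * ((z 0 * F 0 + z 1 * F 1) * z j)) _ y :=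
    (hph.mul_const (F j)).add (hps.mul (hw.mul (hasFDerivAt_coord j y)))
  rw [pd, hV.fderiv]
  simp only [ContinuousLinearMap.add_apply, ContinuousLinearMap.smul_apply,
    ContinuousLinearMap.proj_apply, smul_eq_mul]
  unfold Af Bf
  fin_cases k <;>
    simp [Pi.single_apply] <;>
    ring

lemma pd_Wf (μ a b : ℝ) (F : Fin 2 → ℝ) (i j k : Fin 2) (y : Fin 2 → ℝ) (hy : eunorm y ≠ 0) :
    pd k (fun z : Fin 2 → ℝ => Af μ a b (eunorm z) * (z i * F j)
        + Bf μ a b (eunorm z) * (z i * ((z 0 * F 0 + z 1 * F 1) * z j))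
        + ps μ a b (eunorm z) * (F i * z j + (z 0 * F 0 + z 1 * F 1) * (Pi.single i (1:ℝ) : Fin 2 → ℝ) j)) y
      = (Af1 μ a b (eunorm y) * (eunorm y)⁻¹) * (y k * (y i * F j))
          + Af μ a b (eunorm y) * ((Pi.single k (1:ℝ) : Fin 2 → ℝ) i * F j)
        + ((Bf1 μ a b (eunorm y) * (eunorm y)⁻¹) * (y k * (y i * ((y 0 * F 0 + y 1 * F 1) * y j)))
          + Bf μ a b (eunorm y) * ((Pi.single k (1:ℝ) : Fin 2 → ℝ) i * ((y 0 * F 0 + y 1 * F 1) * y j)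
              + y i * (F k * y j + (y 0 * F 0 + y 1 * F 1) * (Pi.single k (1:ℝ) : Fin 2 → ℝ) j)))
        + ((ps1 μ a b (eunorm y) * (eunorm y)⁻¹) * (y k * (F i * y j
              + (y 0 * F 0 + y 1 * F 1) * (Pi.single i (1:ℝ) : Fin 2 → ℝ) j))
          + ps μ a b (eunorm y) * (F i * (Pi.single k (1:ℝ) : Fin 2 → ℝ) j + F k * (Pi.single i (1:ℝ) : Fin 2 → ℝ) j)) := by
  have hAf := hasFDerivAt_radial y hy (hasDerivAt_Af (μ := μ) (a := a) (b := b) hy)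
  have hBf := hasFDerivAt_radial y hy (hasDerivAt_Bf (μ := μ) (a := a) (b := b) hy)
  have hps := hasFDerivAt_radial y hy (hasDerivAt_ps1 (μ := μ) (a := a) (b := b) hy)
  have hw : HasFDerivAt (fun z : Fin 2 → ℝ => z 0 * F 0 + z 1 * F 1)
      ((F 0) • pr 0 + (F 1) • pr 1) y :=
    ((hasFDerivAt_coord 0 y).mul_const (F 0)).add ((hasFDerivAt_coord 1 y).mul_const (F 1))
  have hV : HasFDerivAt (fun z : Fin 2 → ℝ => Af μ a b (eunorm z) * (z i * F j)
        + Bf μ a b (eunorm z) * (z i * ((z 0 * F 0 + z 1 * F 1) * z j))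
        + ps μ a b (eunorm z) * (F i * z j + (z 0 * F 0 + z 1 * F 1) * (Pi.single i (1:ℝ) : Fin 2 → ℝ) j)) _ y :=
    ((hAf.mul ((hasFDerivAt_coord i y).mul_const (F j))).add
      (hBf.mul ((hasFDerivAt_coord i y).mul (hw.mul (hasFDerivAt_coord j y))))).add
      ((hasFDerivAt_radial y hy (hasDerivAt_ps (μ := μ) (a := a) (b := b) hy)).mul
        (((hasFDerivAt_coord j y).const_mul (F i)).add (hw.mul_const ((Pi.single i (1:ℝ) : Fin 2 → ℝ) j))))
  rw [pd, hV.fderiv]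
  simp only [ContinuousLinearMap.add_apply, ContinuousLinearMap.smul_apply,
    ContinuousLinearMap.proj_apply, smul_eq_mul]
  fin_cases k <;> fin_cases i <;>
    simp [Pi.single_apply] <;>
    ring

lemma pd_Qt (a b : ℝ) (F : Fin 2 → ℝ) (k : Fin 2) (y : Fin 2 → ℝ) (hy : eunorm y ≠ 0) :
    pd k (fun z : Fin 2 → ℝ => th a b (eunorm z) * (z 0 * F 0 + z 1 * F 1)) y
      = (th1 a b (eunorm y) * (eunorm y)⁻¹) * (y k * (y 0 * F 0 + y 1 * F 1))
        + th a b (eunorm y) * F k := by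
  have hth := hasFDerivAt_radial y hy (hasDerivAt_th (a := a) (b := b) hy)
  have hw : HasFDerivAt (fun z : Fin 2 → ℝ => z 0 * F 0 + z 1 * F 1)
      ((F 0) • pr 0 + (F 1) • pr 1) y :=
    ((hasFDerivAt_coord 0 y).mul_const (F 0)).add ((hasFDerivAt_coord 1 y).mul_const (F 1))
  have hV : HasFDerivAt (fun z : Fin 2 → ℝ => th a b (eunorm z) * (z 0 * F 0 + z 1 * F 1)) _ y :=
    hth.mul hw
  rw [pd, hV.fderiv]
  simp only [ContinuousLinearMap.add_apply, ContinuousLinearMap.smul_apply,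
    ContinuousLinearMap.proj_apply, smul_eq_mul]
  fin_cases k <;>
    simp [Pi.single_apply] <;>
    ring
lemma single_comb (g : Fin 2 → ℝ) (j : Fin 2) :
    g 0 * (Pi.single 0 (1:ℝ) : Fin 2 → ℝ) j + g 1 * (Pi.single 1 (1:ℝ) : Fin 2 → ℝ) j = g j := by
  fin_cases j <;> simp

lemma collect (A1 A B1 B Q1 Q x0 x1 F0 F1 R u v d0 d1 : ℝ) (hR : R ≠ 0)
    (hs : x0*x0 + x1*x1 = R^2) (hd : x0*d0 + x1*d1 = u) (hdF : F0*d0 + F1*d1 = v) :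
    ((A1 * R⁻¹) * (x0 * (x0 * v)) + A * (1 * v)
      + ((B1 * R⁻¹) * (x0 * (x0 * ((x0*F0+x1*F1) * u)))
        + B * (1 * ((x0*F0+x1*F1) * u) + x0 * (F0 * u + (x0*F0+x1*F1) * d0)))
      + ((Q1 * R⁻¹) * (x0 * (F0 * u + (x0*F0+x1*F1) * d0)) + Q * (F0 * d0 + F0 * d0)))
    + ((A1 * R⁻¹) * (x1 * (x1 * v)) + A * (1 * v)
      + ((B1 * R⁻¹) * (x1 * (x1 * ((x0*F0+x1*F1) * u)))
        + B * (1 * ((x0*F0+x1*F1) * u) + x1 * (F1 * u + (x0*F0+x1*F1) * d1)))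
      + ((Q1 * R⁻¹) * (x1 * (F1 * u + (x0*F0+x1*F1) * d1)) + Q * (F1 * d1 + F1 * d1)))
    = (A1*R + 2*A + 2*Q) * v
      + (B1*R + 4*B + 2*(Q1*R⁻¹)) * ((x0*F0+x1*F1) * u) := by
  subst hd hdF
  field_simp
  linear_combination (A1 * (F0*d0+F1*d1) + B1 * ((x0*F0+x1*F1) * (x0*d0+x1*d1))) * hs
set_option maxHeartbeats 2000000 in
lemma final_id (μ a b R w u v : ℝ) (hμ : μ ≠ 0) (hR : R ≠ 0) (hba : b - a ≠ 0) :
    -μ * ((Af1 μ a b R * R + 2*Af μ a b R + 2*ps μ a b R) * v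
        + (Bf1 μ a b R * R + 4*Bf μ a b R + 2*(ps1 μ a b R * R⁻¹)) * (w * u))
      + ((th1 a b R * R⁻¹) * (u * w) + th a b R * v)
    = (3 / (2 * π * (b - a) ^ 3 * R)) *
        (((3 * R ^ 2 - 2 * (a + b) * R + a * b) * Real.log R
            + 2 * R ^ 2 - 2 * (a + b) * R + 2 * a * b) * v
          + (a * b - R ^ 2) * (w / R ^ 2) * u) := by
  have hπ : (π : ℝ) ≠ 0 := Real.pi_ne_zero
  unfold Af1 Af Bf1 Bf th1 th ph2 ph1 ps2 ps1 ps Pc2 Pc1 Pc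
  field_simp
  ring

lemma cutoff_eq {a b t : ℝ} (h1 : a < t) (h2 : t < b) : cutoff a b t = Pc a b t := by
  rw [cutoff, if_neg (not_le.mpr h1), if_pos (le_of_lt h2)]
  rfl

lemma continuous_eunorm : Continuous (eunorm : (Fin 2 → ℝ) → ℝ) := by
  unfold eunorm
  exact Real.continuous_sqrt.comp (continuous_finset_sum _ fun i _ => (continuous_apply i).pow 2)

lemma Veq {μ a b : ℝ} (F : Fin 2 → ℝ) (j : Fin 2) {y : Fin 2 → ℝ} (ha : 0 < a)
    (h1 : a < eunorm y) (h2 : eunorm y < b) :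
    cutoff a b (eunorm y) * udelta2 μ F y j
      = ph μ a b (eunorm y) * F j + ps μ a b (eunorm y) * ((y 0 * F 0 + y 1 * F 1) * y j) := by
  have hr : eunorm y ≠ 0 := ne_of_gt (lt_trans ha h1)
  rw [cutoff_eq h1 h2, udelta2]
  unfold ph ps
  rw [dot, Fin.sum_univ_two]
  rw [show (eunorm y)⁻¹ * (eunorm y)⁻¹ = ((eunorm y)^2)⁻¹ by rw [← mul_inv, pow_two]]
  rw [div_eq_mul_inv]
  ring

lemma Qeq {a b : ℝ} (F : Fin 2 → ℝ) {y : Fin 2 → ℝ} (ha : 0 < a)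
    (h1 : a < eunorm y) (h2 : eunorm y < b) :
    cutoff a b (eunorm y) * pdelta2 F y
      = th a b (eunorm y) * (y 0 * F 0 + y 1 * F 1) := by
  have hr : eunorm y ≠ 0 := ne_of_gt (lt_trans ha h1)
  rw [cutoff_eq h1 h2, pdelta2]
  unfold th
  rw [dot, Fin.sum_univ_two]
  rw [show (eunorm y)⁻¹ * (eunorm y)⁻¹ = ((eunorm y)^2)⁻¹ by rw [← mul_inv, pow_two]]
  rw [div_eq_mul_inv]
  ring

/-- The Stokes operator applied to the truncated 2D Stokeslet `(χ̃ u_δ, χ̃ p_δ)` on the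
annulus `a < |x| < b` gives the explicit function `g`. -/
theorem stokes_truncated_stokeslet2d (μ : ℝ) (hμ : 0 < μ) (F : Fin 2 → ℝ)
    (a b : ℝ) (ha : 0 < a) (hab : a < b)
    (x : Fin 2 → ℝ) (hxa : a < eunorm x) (hxb : eunorm x < b) :
    ∀ j : Fin 2,
      -μ * lap (fun y => cutoff a b (eunorm y) * udelta2 μ F y j) x +
        pd j (fun y => cutoff a b (eunorm y) * pdelta2 F y) x =
      (3 / (2 * π * (b - a) ^ 3 * eunorm x)) *
        (((3 * (eunorm x) ^ 2 - 2 * (a + b) * eunorm x + a * b) * Real.log (eunorm x)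
            + 2 * (eunorm x) ^ 2 - 2 * (a + b) * eunorm x + 2 * a * b) * F j
          + (a * b - (eunorm x) ^ 2) * (dot x F / (eunorm x) ^ 2) * x j) := by
  intro j
  have hμ' : μ ≠ 0 := ne_of_gt hμ
  have hba : b - a ≠ 0 := sub_ne_zero.mpr hab.ne'
  have hr0 : 0 < eunorm x := lt_trans ha hxa
  have hrne : eunorm x ≠ 0 := ne_of_gt hr0
  have hSopen : IsOpen {y : Fin 2 → ℝ | a < eunorm y ∧ eunorm y < b} := by
    have : {y : Fin 2 → ℝ | a < eunorm y ∧ eunorm y < b} = eunorm ⁻¹' (Set.Ioo a b) := rfl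
    rw [this]
    exact isOpen_Ioo.preimage continuous_eunorm
  have hxS : x ∈ {y : Fin 2 → ℝ | a < eunorm y ∧ eunorm y < b} := ⟨hxa, hxb⟩
  have hpdV : ∀ i : Fin 2,
      (fun y => pd i (fun z => cutoff a b (eunorm z) * udelta2 μ F z j) y) =ᶠ[nhds x]
      (fun z : Fin 2 → ℝ => Af μ a b (eunorm z) * (z i * F j)
        + Bf μ a b (eunorm z) * (z i * ((z 0 * F 0 + z 1 * F 1) * z j))
        + ps μ a b (eunorm z) * (F i * z j
            + (z 0 * F 0 + z 1 * F 1) * (Pi.single i (1:ℝ) : Fin 2 → ℝ) j)) := by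
    intro i
    filter_upwards [hSopen.mem_nhds hxS] with y hy
    have hyne : eunorm y ≠ 0 := ne_of_gt (lt_trans ha hy.1)
    have hev : (fun z => cutoff a b (eunorm z) * udelta2 μ F z j) =ᶠ[nhds y]
        (fun z : Fin 2 → ℝ => ph μ a b (eunorm z) * F j
          + ps μ a b (eunorm z) * ((z 0 * F 0 + z 1 * F 1) * z j)) := by
      filter_upwards [hSopen.mem_nhds hy] with z hz
      exact Veq F j ha hz.1 hz.2
    calc pd i (fun z => cutoff a b (eunorm z) * udelta2 μ F z j) y
        = pd i (fun z : Fin 2 → ℝ => ph μ a b (eunorm z) * F j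
            + ps μ a b (eunorm z) * ((z 0 * F 0 + z 1 * F 1) * z j)) y := by
          rw [pd, pd, hev.fderiv_eq]
      _ = _ := pd_Vt μ a b F j i y hyne
  have e : ∀ i : Fin 2,
      pd i (fun y => pd i (fun z => cutoff a b (eunorm z) * udelta2 μ F z j) y) x
      = pd i (fun z : Fin 2 → ℝ => Af μ a b (eunorm z) * (z i * F j)
        + Bf μ a b (eunorm z) * (z i * ((z 0 * F 0 + z 1 * F 1) * z j))
        + ps μ a b (eunorm z) * (F i * z j
            + (z 0 * F 0 + z 1 * F 1) * (Pi.single i (1:ℝ) : Fin 2 → ℝ) j)) x := by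
    intro i
    rw [pd, pd, (hpdV i).fderiv_eq]
  have hd : x 0 * (Pi.single 0 (1:ℝ) : Fin 2 → ℝ) j + x 1 * (Pi.single 1 (1:ℝ) : Fin 2 → ℝ) j
      = x j := single_comb x j
  have hdF : F 0 * (Pi.single 0 (1:ℝ) : Fin 2 → ℝ) j + F 1 * (Pi.single 1 (1:ℝ) : Fin 2 → ℝ) j
      = F j := single_comb F j
  have hs : x 0 * x 0 + x 1 * x 1 = eunorm x ^ 2 := (eunorm_sq x).symm
  have hcol : pd 0 (fun y => pd 0 (fun z => cutoff a b (eunorm z) * udelta2 μ F z j) y) x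
      + pd 1 (fun y => pd 1 (fun z => cutoff a b (eunorm z) * udelta2 μ F z j) y) x
      = (Af1 μ a b (eunorm x) * eunorm x + 2 * Af μ a b (eunorm x)
          + 2 * ps μ a b (eunorm x)) * F j
        + (Bf1 μ a b (eunorm x) * eunorm x + 4 * Bf μ a b (eunorm x)
          + 2 * (ps1 μ a b (eunorm x) * (eunorm x)⁻¹)) * ((x 0 * F 0 + x 1 * F 1) * x j) := by
    rw [e 0, e 1, pd_Wf μ a b F 0 j 0 x hrne, pd_Wf μ a b F 1 j 1 x hrne]
    simp only [Pi.single_eq_same]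
    linear_combination collect (Af1 μ a b (eunorm x)) (Af μ a b (eunorm x))
      (Bf1 μ a b (eunorm x)) (Bf μ a b (eunorm x)) (ps1 μ a b (eunorm x)) (ps μ a b (eunorm x))
      (x 0) (x 1) (F 0) (F 1) (eunorm x) (x j) (F j)
      ((Pi.single 0 (1:ℝ) : Fin 2 → ℝ) j) ((Pi.single 1 (1:ℝ) : Fin 2 → ℝ) j) hrne hs hd hdF
  have keyP : pd j (fun y => cutoff a b (eunorm y) * pdelta2 F y) x
      = (th1 a b (eunorm x) * (eunorm x)⁻¹) * (x j * (x 0 * F 0 + x 1 * F 1))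
        + th a b (eunorm x) * F j := by
    have hev : (fun y => cutoff a b (eunorm y) * pdelta2 F y) =ᶠ[nhds x]
        (fun z : Fin 2 → ℝ => th a b (eunorm z) * (z 0 * F 0 + z 1 * F 1)) := by
      filter_upwards [hSopen.mem_nhds hxS] with z hz
      exact Qeq F ha hz.1 hz.2
    calc pd j (fun y => cutoff a b (eunorm y) * pdelta2 F y) x
        = pd j (fun z : Fin 2 → ℝ => th a b (eunorm z) * (z 0 * F 0 + z 1 * F 1)) x := by
          rw [pd, pd, hev.fderiv_eq]
      _ = _ := pd_Qt a b F j x hrne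
  rw [lap, Fin.sum_univ_two, hcol, keyP,
    show dot x F = x 0 * F 0 + x 1 * F 1 from by rw [dot, Fin.sum_univ_two]]
  linear_combination final_id μ a b (eunorm x) (x 0 * F 0 + x 1 * F 1) (x j) (F j) hμ' hrne hba
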